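/- The necklace binomial coefficients are unimodal in k: for 0 ≤ k < ⌊t/2⌋, N(t,k) ≤ N(t,k+1). -/

import Mathlib

def neckN (t k : Nat) : Nat :=
  if t % 2 = 0 ∧ k % 2 = 1 then Nat.choose t k / 2
  else (Nat.choose t k + Nat.choose (t / 2) (k / 2)) / 2

lemma choose_mono_le_half {n a b : ℕ} (hab : a ≤ b) (hb : b ≤ n / 2) :
    Nat.choose n a ≤ Nat.choose n b := by
  induction b with
  | zero => simp_all
  | succ b ih =>
    rcases Nat.lt_or_ge a (b+1) with h | h
    · exact le_trans (ih (Nat.lt_succ_iff.mp h) (le_trans (Nat.le_succ b) hb))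
        (Nat.choose_le_succ_of_lt_half_left hb)
    · have : a = b + 1 := le_antisymm hab h
      simp [this]

lemma sq_choose_le (s m : ℕ) : Nat.choose s m * Nat.choose s m ≤ Nat.choose (2 * s) (2 * m) := by
  have h := Nat.add_choose_eq s s (2 * m)
  rw [← two_mul] at h
  rw [h]
  have hm : (m, m) ∈ Finset.HasAntidiagonal.antidiagonal (2 * m) := by
    simp [two_mul]
  exact Finset.single_le_sum (f := fun ij => Nat.choose s ij.1 * Nat.choose s ij.2)
    (fun i _ => Nat.zero_le _) hm

lemma hard (s m : ℕ) (h : 2 * m < s) :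
    Nat.choose (2 * s) (2 * m) + Nat.choose s m ≤ Nat.choose (2 * s) (2 * m + 1) := by
  set C := Nat.choose (2 * s) (2 * m)
  set Cs := Nat.choose s m
  have hpos : 0 < 2 * m + 1 := Nat.succ_pos _
  refine Nat.le_of_mul_le_mul_right ?_ hpos
  have key : Nat.choose (2 * s) (2 * m + 1) * (2 * m + 1) = C * (2 * s - 2 * m) :=
    Nat.choose_succ_right_eq (2 * s) (2 * m)
  rw [key]
  have hd : 2 * s - 2 * m = (2 * m + 1) + (2 * (s - 2 * m) - 1) := by omega
  rw [hd]
  have goal2 : Cs * (2 * m + 1) ≤ C * (2 * (s - 2 * m) - 1) := by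
    have hA : Cs * Cs ≤ C := sq_choose_le s m
    have hB : 2 * m + 1 ≤ Cs * (2 * (s - 2 * m) - 1) := by
      rcases Nat.eq_zero_or_pos m with rfl | hm
      · have hCs : Cs = 1 := Nat.choose_zero_right s
        rw [hCs]; omega
      · have h1 : s ≤ Cs := by
          have : Nat.choose s 1 ≤ Nat.choose s m :=
            choose_mono_le_half hm (by omega)
          simpa using this
        have h2 : 1 ≤ 2 * (s - 2 * m) - 1 := by omega
        calc 2 * m + 1 ≤ s := by omega
          _ ≤ Cs := h1
          _ = Cs * 1 := (Nat.mul_one _).symm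
          _ ≤ Cs * (2 * (s - 2 * m) - 1) := Nat.mul_le_mul_left _ h2
    calc Cs * (2 * m + 1) ≤ Cs * (Cs * (2 * (s - 2 * m) - 1)) := Nat.mul_le_mul_left _ hB
      _ = Cs * Cs * (2 * (s - 2 * m) - 1) := by ring
      _ ≤ C * (2 * (s - 2 * m) - 1) := Nat.mul_le_mul_right _ hA
  calc (C + Cs) * (2 * m + 1) = C * (2 * m + 1) + Cs * (2 * m + 1) := by ring
    _ ≤ C * (2 * m + 1) + C * (2 * (s - 2 * m) - 1) := Nat.add_le_add_left goal2 _
    _ = C * (2 * m + 1 + (2 * (s - 2 * m) - 1)) := by ring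

theorem neckN_unimodal (t k : ℕ) (hk : k < t / 2) : neckN t k ≤ neckN t (k + 1) := by
  have hchoose : Nat.choose t k ≤ Nat.choose t (k + 1) :=
    Nat.choose_le_succ_of_lt_half_left hk
  rcases Nat.even_or_odd t with ⟨s, hs⟩ | ⟨s, hs⟩
  · -- t even
    have ht : t % 2 = 0 := by omega
    rcases Nat.even_or_odd k with ⟨m, hm⟩ | ⟨m, hm⟩
    · -- k even: hard case
      have hke : k % 2 = 0 := by omega
      have hk1 : (k + 1) % 2 = 1 := by omega
      simp only [neckN]
      rw [if_neg (by omega), if_pos ⟨ht, hk1⟩]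
      apply Nat.div_le_div_right
      have h2m : 2 * m < s := by omega
      have := hard s m h2m
      have e1 : t = 2 * s := by omega
      have e2 : k = 2 * m := by omega
      have e3 : t / 2 = s := by omega
      have e4 : k / 2 = m := by omega
      rw [e3, e4, e1, e2]
      exact this
    · -- k odd: easy
      have hko : k % 2 = 1 := by omega
      have hk1 : (k + 1) % 2 = 0 := by omega
      simp only [neckN]
      rw [if_pos ⟨ht, hko⟩, if_neg (by omega)]
      exact le_trans (Nat.div_le_div_right hchoose)
        (Nat.div_le_div_right (Nat.le_add_right _ _))
  · -- t odd
    have ht : t % 2 = 1 := by omega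
    simp only [neckN]
    rw [if_neg (by omega), if_neg (by omega)]
    apply Nat.div_le_div_right
    rcases Nat.even_or_odd k with ⟨m, hm⟩ | ⟨m, hm⟩
    · have e : (k + 1) / 2 = k / 2 := by omega
      rw [e]
      exact Nat.add_le_add_right hchoose _
    · have e1 : k / 2 = m := by omega
      have e2 : (k + 1) / 2 = m + 1 := by omega
      rw [e1, e2]
      have : Nat.choose (t / 2) m ≤ Nat.choose (t / 2) (m + 1) :=
        Nat.choose_le_succ_of_lt_half_left (by omega)
      exact Nat.add_le_add hchoose this
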